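/- For all integers p, q, r ≥ 1, the determinant of the Gram matrix G(p,q,r) of the tree T_{p,q,r} equals pq + pr + qr − pqr. -/

import Mathlib

set_option maxRecDepth 8000


/-- The vertex type of the tree `T_{p,q,r}`: a central vertex together with three chains
having `p-1`, `q-1` and `r-1` further vertices respectively (so `T_{p,q,r}` has
`p + q + r - 2` vertices when `p, q, r ≥ 1`). -/
abbrev TVertex (p q r : ℕ) : Type := Unit ⊕ (Fin (p - 1) ⊕ (Fin (q - 1) ⊕ Fin (r - 1)))

/-- Adjacency in the tree `T_{p,q,r}`: the central vertex is adjacent to the first vertex of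
each chain, and consecutive vertices of a chain are adjacent. -/
def TAdj {p q r : ℕ} : TVertex p q r → TVertex p q r → Bool
  | Sum.inl _, Sum.inr (Sum.inl i) => i.val == 0
  | Sum.inl _, Sum.inr (Sum.inr (Sum.inl i)) => i.val == 0
  | Sum.inl _, Sum.inr (Sum.inr (Sum.inr i)) => i.val == 0
  | Sum.inr (Sum.inl i), Sum.inl _ => i.val == 0
  | Sum.inr (Sum.inr (Sum.inl i)), Sum.inl _ => i.val == 0
  | Sum.inr (Sum.inr (Sum.inr i)), Sum.inl _ => i.val == 0
  | Sum.inr (Sum.inl i), Sum.inr (Sum.inl j) => (i.val + 1 == j.val) || (j.val + 1 == i.val)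
  | Sum.inr (Sum.inr (Sum.inl i)), Sum.inr (Sum.inr (Sum.inl j)) =>
      (i.val + 1 == j.val) || (j.val + 1 == i.val)
  | Sum.inr (Sum.inr (Sum.inr i)), Sum.inr (Sum.inr (Sum.inr j)) =>
      (i.val + 1 == j.val) || (j.val + 1 == i.val)
  | _, _ => false

/-- The Gram matrix `G(p,q,r)` of the tree `T_{p,q,r}`: diagonal entries `2`, entries `-1`
between adjacent vertices, and `0` otherwise. -/
def gramT (p q r : ℕ) : Matrix (TVertex p q r) (TVertex p q r) ℤ :=
  Matrix.of fun v w => if v = w then 2 else if TAdj v w then -1 else 0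


/-- The Gram matrix of the path with `m` vertices, over `ℚ`. -/
def Pm (m : ℕ) : Matrix (Fin m) (Fin m) ℚ :=
  Matrix.of fun i j =>
    if i = j then 2 else if i.val + 1 = j.val ∨ j.val + 1 = i.val then -1 else 0

lemma Pm_sub1 (m : ℕ) : (Pm (m + 1)).submatrix Fin.succ Fin.succ = Pm m := by
  ext i j
  simp only [Pm, Matrix.submatrix_apply, Matrix.of_apply, Fin.succ_inj, Fin.val_succ,
    add_left_inj]

lemma Pm_sub2 (m : ℕ) :
    (Pm (m + 2)).submatrix (fun i : Fin m => i.succ.succ) (fun j : Fin m => j.succ.succ)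
      = Pm m := by
  ext i j
  simp only [Pm, Matrix.submatrix_apply, Matrix.of_apply, Fin.succ_inj, Fin.val_succ,
    add_left_inj]

lemma Pm_det : ∀ m, (Pm m).det = m + 1 := by
  intro m
  induction m using Nat.strong_induction_on with
  | _ m ih =>
    match m with
    | 0 => simp [Matrix.det_fin_zero]
    | 1 => simp [Matrix.det_fin_one, Pm]; norm_num
    | (k + 2) =>
      have hk : (Pm k).det = k + 1 := ih k (by omega)
      have hk1 : (Pm (k + 1)).det = (k : ℚ) + 1 + 1 := by
        have := ih (k + 1) (by omega); rw [this]; push_cast; ring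
      have key2 : ((Pm (k+2)).submatrix Fin.succ (Fin.succAbove 1)).det = -((k:ℚ)+1) := by
        rw [Matrix.det_succ_column_zero, Fin.sum_univ_succ]
        have hz : ∀ i : Fin k,
            (Pm (k+2)).submatrix Fin.succ (Fin.succAbove 1) i.succ 0 = 0 := by
          intro i
          simp [Pm, Fin.succAbove, Fin.ext_iff, Fin.lt_def]
        simp only [hz, zero_mul, mul_zero, Finset.sum_const_zero, add_zero]
        have h00 : (Pm (k+2)).submatrix Fin.succ (Fin.succAbove 1) 0 0 = -1 := by
          simp [Pm, Fin.succAbove, Fin.ext_iff, Fin.lt_def]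
        have hsub : ((Pm (k + 2)).submatrix Fin.succ (Fin.succAbove 1)).submatrix
            (Fin.succAbove 0) Fin.succ = Pm k := by
          rw [Matrix.submatrix_submatrix, ← Pm_sub2 k]
          ext i j
          simp [Pm, Function.comp, Fin.succAbove, Fin.ext_iff, Fin.lt_def]
        rw [h00, hsub, hk]
        simp
      rw [Matrix.det_succ_row_zero, Fin.sum_univ_succ, Fin.sum_univ_succ]
      have h0 : ∀ j : Fin k, Pm (k + 2) 0 j.succ.succ = 0 := by
        intro j
        simp [Pm, Fin.ext_iff]
      simp only [h0, mul_zero, zero_mul, Finset.sum_const_zero, add_zero]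
      have e00 : Pm (k + 2) 0 0 = 2 := by simp [Pm]
      have e01 : Pm (k + 2) 0 (Fin.succ 0) = -1 := by simp [Pm, Fin.ext_iff]
      have hsa : (Fin.succAbove (0 : Fin (k + 2))) = Fin.succ := Fin.succAbove_zero
      rw [e00, e01, hsa, Pm_sub1, hk1]
      have h1 : (Fin.succ (0 : Fin (k+1))) = 1 := rfl
      rw [h1, key2]
      simp only [Fin.val_zero, Fin.val_one, pow_zero, pow_one]
      push_cast
      ring

noncomputable instance PmInv (m : ℕ) : Invertible (Pm m) :=
  (Pm m).invertibleOfIsUnitDet (by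
    rw [Pm_det]
    exact isUnit_iff_ne_zero.2 (by positivity))

lemma invPm_00 (k : ℕ) : ⅟(Pm (k+1)) 0 0 = ((k:ℚ)+1)/((k:ℚ)+2) := by
  rw [Matrix.invOf_eq_nonsing_inv, Matrix.inv_def]
  have h : (Pm (k+1)).adjugate 0 0 = (k : ℚ) + 1 := by
    rw [Matrix.adjugate_fin_succ_eq_det_submatrix]
    simp [Fin.succAbove_zero, Pm_sub1, Pm_det]
  simp [h, Pm_det, Ring.inverse_eq_inv]
  push_cast
  ring

def uvec (k : ℕ) : Fin k → ℚ := fun i => if i.val = 0 then -1 else 0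

lemma chainSum (k : ℕ) :
    (∑ j, ∑ i, uvec k i * ⅟(Pm k) i j * uvec k j) = (k : ℚ) / ((k:ℚ)+1) := by
  cases k with
  | zero => simp
  | succ k =>
    have hu : uvec (k+1) = fun i => if i = 0 then -1 else 0 := by
      funext i
      simp only [uvec, Fin.ext_iff, Fin.val_zero]
    rw [Fintype.sum_eq_single (0 : Fin (k+1)) (fun x hx => by simp [hu, hx]),
      Fintype.sum_eq_single (0 : Fin (k+1)) (fun x hx => by simp [hu, hx])]
    simp [hu, invPm_00]
    push_cast
    ring

lemma gram_decomp (p q r : ℕ) :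
    (gramT p q r).map (fun x : ℤ => (x:ℚ)) =
      Matrix.fromBlocks (Matrix.of fun _ _ => (2:ℚ))
        (Matrix.of fun _ x => Sum.elim (uvec (p-1)) (Sum.elim (uvec (q-1)) (uvec (r-1))) x)
        (Matrix.of fun x _ => Sum.elim (uvec (p-1)) (Sum.elim (uvec (q-1)) (uvec (r-1))) x)
        (Matrix.fromBlocks (Pm (p-1)) 0 0 (Matrix.fromBlocks (Pm (q-1)) 0 0 (Pm (r-1)))) := by
  ext v w
  rcases v with _ | (i | i | i) <;> rcases w with _ | (j | j | j) <;>
    · simp only [Matrix.map_apply, gramT, Matrix.of_apply, TAdj,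
        Matrix.fromBlocks_apply₁₁, Matrix.fromBlocks_apply₁₂, Matrix.fromBlocks_apply₂₁,
        Matrix.fromBlocks_apply₂₂, Sum.elim_inl, Sum.elim_inr, uvec, Pm,
        Bool.or_eq_true, beq_iff_eq, Sum.inr.injEq, Sum.inl.injEq, Matrix.zero_apply]
      split_ifs <;> simp_all

noncomputable instance DinnerInv (b c : ℕ) :
    Invertible (Matrix.fromBlocks (Pm b) 0 0 (Pm c)) :=
  Matrix.fromBlocksZero₂₁Invertible (Pm b) 0 (Pm c)

noncomputable instance Dfull (a b c : ℕ) :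
    Invertible (Matrix.fromBlocks (Pm a) 0 0 (Matrix.fromBlocks (Pm b) 0 0 (Pm c))) :=
  Matrix.fromBlocksZero₂₁Invertible (Pm a) 0 _

lemma invOf_diag {m n : Type*} [Fintype m] [Fintype n] [DecidableEq m] [DecidableEq n]
    (X : Matrix m m ℚ) (Y : Matrix n n ℚ) [Invertible X] [Invertible Y]
    [Invertible (Matrix.fromBlocks X 0 0 Y)] :
    ⅟(Matrix.fromBlocks X 0 0 Y) = Matrix.fromBlocks (⅟X) 0 0 (⅟Y) := by
  rw [Matrix.invOf_fromBlocks_zero₂₁_eq]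
  simp

lemma entryX (a b c : ℕ) :
    ((Matrix.of fun _ x => Sum.elim (uvec a) (Sum.elim (uvec b) (uvec c)) x :
          Matrix Unit _ ℚ) *
        ⅟(Matrix.fromBlocks (Pm a) 0 0 (Matrix.fromBlocks (Pm b) 0 0 (Pm c))) *
        (Matrix.of fun x _ => Sum.elim (uvec a) (Sum.elim (uvec b) (uvec c)) x :
          Matrix _ Unit ℚ)) default default
        = (a:ℚ)/((a:ℚ)+1) + ((b:ℚ)/((b:ℚ)+1) + (c:ℚ)/((c:ℚ)+1)) := by
  rw [invOf_diag, invOf_diag]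
  rw [Matrix.mul_apply]
  simp only [Matrix.mul_apply, Finset.sum_mul]
  rw [← chainSum a, ← chainSum b, ← chainSum c]
  simp [Fintype.sum_sum_type, Matrix.fromBlocks_apply₁₁, Matrix.fromBlocks_apply₁₂,
    Matrix.fromBlocks_apply₂₁, Matrix.fromBlocks_apply₂₂, Matrix.of_apply,
    Sum.elim_inl, Sum.elim_inr, Matrix.zero_apply, zero_mul, mul_zero,
    Finset.sum_const_zero, add_zero, zero_add, Finset.sum_add_distrib]


/-- for all `p, q, r ≥ 1` the determinant of the Gram matrix of `T_{p,q,r}`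
equals `pq + pr + qr - pqr`. -/
theorem stmt8 (p q r : ℕ) (hp : 1 ≤ p) (hq : 1 ≤ q) (hr : 1 ≤ r) :
    (gramT p q r).det =
      (p : ℤ) * q + (p : ℤ) * r + (q : ℤ) * r - (p : ℤ) * q * r := by
  obtain ⟨a, rfl⟩ : ∃ a, p = a + 1 := ⟨p - 1, (Nat.succ_pred_eq_of_pos hp).symm⟩
  obtain ⟨b, rfl⟩ : ∃ b, q = b + 1 := ⟨q - 1, (Nat.succ_pred_eq_of_pos hq).symm⟩
  obtain ⟨c, rfl⟩ : ∃ c, r = c + 1 := ⟨r - 1, (Nat.succ_pred_eq_of_pos hr).symm⟩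
  have hcast : (((gramT (a+1) (b+1) (c+1)).det : ℤ) : ℚ)
      = ((gramT (a+1) (b+1) (c+1)).map (fun x : ℤ => (x:ℚ))).det := by
    have := (Int.castRingHom ℚ).map_det (gramT (a+1) (b+1) (c+1))
    rw [RingHom.mapMatrix_apply] at this
    exact this
  have key : ((gramT (a+1) (b+1) (c+1)).map (fun x : ℤ => (x:ℚ))).det
      = ((a:ℚ)+1)*(((b:ℚ)+1)*((c:ℚ)+1)) *
        (2 - ((a:ℚ)/((a:ℚ)+1) + ((b:ℚ)/((b:ℚ)+1) + (c:ℚ)/((c:ℚ)+1)))) := by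
    rw [gram_decomp]
    rw [Matrix.det_fromBlocks₂₂]
    rw [Matrix.det_fromBlocks_zero₂₁, Matrix.det_fromBlocks_zero₂₁, Pm_det, Pm_det, Pm_det]
    congr 1
    rw [Matrix.det_unique]
    rw [Matrix.sub_apply, entryX]
    simp only [Nat.add_sub_cancel]
    simp
  rw [key] at hcast
  have ha : (a:ℚ)+1 ≠ 0 := by positivity
  have hb : (b:ℚ)+1 ≠ 0 := by positivity
  have hc : (c:ℚ)+1 ≠ 0 := by positivity
  have : (((gramT (a+1) (b+1) (c+1)).det : ℤ) : ℚ)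
      = ((a:ℚ)+1) * ((b:ℚ)+1) + ((a:ℚ)+1) * ((c:ℚ)+1) + ((b:ℚ)+1) * ((c:ℚ)+1)
        - ((a:ℚ)+1) * ((b:ℚ)+1) * ((c:ℚ)+1) := by
    rw [hcast]
    field_simp
    ring
  have goal : ((gramT (a+1) (b+1) (c+1)).det : ℤ)
      = ((a:ℤ)+1) * ((b:ℤ)+1) + ((a:ℤ)+1) * ((c:ℤ)+1) + ((b:ℤ)+1) * ((c:ℤ)+1)
        - ((a:ℤ)+1) * ((b:ℤ)+1) * ((c:ℤ)+1) := by
    exact_mod_cast this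
  rw [goal]
  push_cast
  ring
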